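/- Let H be a Hamel basis of ℝ over ℚ equipped with a linear order ◁. For n > 1 and s ∈ (ℚ \ {0})ⁿ, let s·Hⁿ be the set of reals of the form Σᵢ s(i)hᵢ with h₀ ◁ ⋯ ◁ h_{n-1} in H, and for x ∈ s·Hⁿ let last(x) = h_{n-1} in this (unique) representation. Then any subset S ⊆ s·Hⁿ such that last is injective on S is ℚ-linearly independent. -/

import Mathlib

private lemma exists_rmax {α : Type*} (r : α → α → Prop) [IsStrictTotalOrder α r]
    (t : Finset α) (ht : t.Nonempty) : ∃ x ∈ t, ∀ y ∈ t, y = x ∨ r y x := by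
  classical
  induction t using Finset.induction with
  | empty => simp at ht
  | @insert a t hat ih =>
    rcases t.eq_empty_or_nonempty with rfl | htne
    · exact ⟨a, by simp, by simp⟩
    · obtain ⟨x, hxt, hx⟩ := ih htne
      rcases trichotomous_of r a x with h | h | h
      · refine ⟨x, Finset.mem_insert_of_mem hxt, ?_⟩
        intro y hy
        rcases Finset.mem_insert.mp hy with rfl | hy
        · exact Or.inr h
        · exact hx y hy
      · exact ⟨x, Finset.mem_insert_of_mem hxt, fun y hy => by
          rcases Finset.mem_insert.mp hy with rfl | hy
          · exact Or.inl h
          · exact hx y hy⟩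
      · refine ⟨a, Finset.mem_insert_self a t, ?_⟩
        intro y hy
        rcases Finset.mem_insert.mp hy with rfl | hy
        · exact Or.inl rfl
        · rcases hx y hy with rfl | h' 
          · exact Or.inr h
          · exact Or.inr (_root_.trans h' h)

theorem stmt4 (H : Set ℝ) (hind : LinearIndependent ℚ ((↑) : H → ℝ))
    (hspan : Submodule.span ℚ H = ⊤)
    (r : ℝ → ℝ → Prop) (hr : IsStrictTotalOrder ℝ r)
    (n : ℕ) (hn : 1 < n) (s : Fin n → ℚ) (hs : ∀ i, s i ≠ 0)
    (S : Set ℝ) (L : ℝ → ℝ)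
    (hS : ∀ x ∈ S, ∃ h : Fin n → ℝ, (∀ i, h i ∈ H) ∧
      (∀ i j : Fin n, i < j → r (h i) (h j)) ∧
      x = ∑ i, (s i : ℝ) * h i ∧ L x = h ⟨n - 1, by omega⟩)
    (hL : Set.InjOn L S) :
    LinearIndependent ℚ ((↑) : S → ℝ) := by
  classical
  have hspan' : ⊤ ≤ Submodule.span ℚ (Set.range ((↑) : H → ℝ)) := by
    rw [Subtype.range_coe]; rw [hspan]
  let B : Module.Basis H ℚ ℝ := Module.Basis.mk hind hspan'
  have hlast : (n - 1 : ℕ) < n := by omega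
  -- representation lemma
  have repr_eq : ∀ x ∈ S, ∃ (h : Fin n → ℝ) (hm : ∀ i, h i ∈ H),
      (∀ i j : Fin n, i < j → r (h i) (h j)) ∧ L x = h ⟨n - 1, hlast⟩ ∧
      B.repr x = ∑ i, Finsupp.single ⟨h i, hm i⟩ (s i) := by
    intro x hx
    obtain ⟨h, hm, hord, hxeq, hLx⟩ := hS x hx
    refine ⟨h, hm, hord, hLx, ?_⟩
    rw [hxeq, map_sum]
    refine Finset.sum_congr rfl fun i _ => ?_
    have h1 : (s i : ℝ) * h i = (s i) • (h i) := by simp [Rat.smul_def]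
    have hb : B.repr (h i) = Finsupp.single ⟨h i, hm i⟩ 1 := by
      have h2 := B.repr_self ⟨h i, hm i⟩
      rwa [show (B ⟨h i, hm i⟩ : ℝ) = h i by simp [B]] at h2
    rw [h1, map_smul, hb, Finsupp.smul_single, smul_eq_mul, mul_one]
  -- coordinate evaluation
  have coord : ∀ x ∈ S, ∀ y ∈ S, ∀ (hy : L y ∈ H),
      (B.repr x) ⟨L y, hy⟩ ≠ 0 → x = y ∨ r (L y) (L x) := by
    intro x hx y hy hyH hne
    obtain ⟨h, hm, hord, hLx, hrepr⟩ := repr_eq x hx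
    rw [hrepr, Finsupp.finset_sum_apply] at hne
    obtain ⟨i, _, hi⟩ := Finset.exists_ne_zero_of_sum_ne_zero hne
    rw [Finsupp.single_apply] at hi
    have heq : h i = L y := by
      by_contra hc
      rw [if_neg (by simp [Subtype.ext_iff, hc])] at hi
      exact hi rfl
    rcases eq_or_lt_of_le (Nat.le_of_lt_succ (by omega : (i : ℕ) < n - 1 + 1)) with h1 | h1
    · left
      apply hL hx hy
      rw [hLx, ← heq]
      congr 1
      exact Fin.ext h1.symm
    · right
      rw [← heq, hLx]
      exact hord i ⟨n - 1, hlast⟩ h1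
  rw [linearIndependent_iff]
  intro l hl
  by_contra hne
  have hsupp : l.support.Nonempty := Finsupp.support_nonempty_iff.mpr hne
  obtain ⟨m, hmmem, hm'⟩ := exists_rmax r (l.support.image (fun x => L x.1)) (hsupp.image _)
  obtain ⟨x, hxs, hxL⟩ := Finset.mem_image.mp hmmem
  have hxS : (x : ℝ) ∈ S := x.2
  obtain ⟨h, hmem, hord, hLx, hrepr⟩ := repr_eq x hxS
  have hLH : L (x : ℝ) ∈ H := hLx ▸ hmem _
  have h0 : (B.repr (Finsupp.linearCombination ℚ ((↑) : S → ℝ) l)) ⟨L (x : ℝ), hLH⟩ = 0 := by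
    rw [hl]; simp
  rw [Finsupp.linearCombination_apply, Finsupp.sum, map_sum, Finsupp.finset_sum_apply] at h0
  have hsum : ∀ y ∈ l.support, y ≠ x →
      (B.repr (l y • (y : ℝ))) ⟨L (x : ℝ), hLH⟩ = 0 := by
    intro y hys hyx
    rw [map_smul, Finsupp.smul_apply]
    rcases eq_or_ne ((B.repr (y : ℝ)) ⟨L (x : ℝ), hLH⟩) 0 with h' | h'
    · rw [h', smul_zero]
    · rcases coord (y : ℝ) y.2 (x : ℝ) hxS hLH h' with he | hlt'
      · exact absurd (Subtype.ext he) hyx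
      · exfalso
        have hyimg : L (y : ℝ) ∈ l.support.image (fun x => L x.1) :=
          Finset.mem_image.mpr ⟨y, hys, rfl⟩
        rcases hm' _ hyimg with he | h''
        · rw [← hxL] at he
          exact hyx (Subtype.ext (hL y.2 hxS he))
        · rw [← hxL] at h''
          exact (hr.irrefl _) (_root_.trans hlt' h'')
  rw [Finset.sum_eq_single x (fun y hy hyx => hsum y hy hyx) (fun hx' => absurd hxs hx')] at h0
  rw [map_smul, Finsupp.smul_apply] at h0
  have hcx : (B.repr (x : ℝ)) ⟨L (x : ℝ), hLH⟩ = s ⟨n - 1, hlast⟩ := by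
    rw [hrepr, Finsupp.finset_sum_apply]
    rw [Finset.sum_eq_single (⟨n - 1, hlast⟩ : Fin n)]
    · rw [Finsupp.single_apply, if_pos (by simp [Subtype.ext_iff, hLx])]
    · intro i _ hi
      rw [Finsupp.single_apply, if_neg]
      simp only [Subtype.mk.injEq]
      intro hc
      have hne' : (i : ℕ) ≠ n - 1 := fun hc => hi (Fin.ext hc)
      have hilt : i < (⟨n - 1, hlast⟩ : Fin n) := by
        have h2 := i.isLt
        exact Fin.lt_def.mpr (show (i : ℕ) < n - 1 by omega)
      have := hord i ⟨n - 1, hlast⟩ hilt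
      rw [hLx] at hc
      exact (hr.irrefl _) (hc ▸ this)
    · intro hmem'
      exact absurd (Finset.mem_univ _) hmem'
  rw [hcx] at h0
  rcases (show l x = 0 ∨ s ⟨n - 1, hlast⟩ = 0 by
      simpa [smul_eq_mul, mul_eq_zero] using h0) with h' | h'
  · exact (Finsupp.mem_support_iff.mp hxs) h'
  · exact (hs _) h'
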